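/- arXiv:2409.19428 — 6 statements merged into one kernel-verified Lean document; each statement's English description precedes it below -/
import Mathlib

section
/- Let x ∈ ℝⁿ, g = ∇f(x), B symmetric with spectral norm ‖B‖, σ > 0, θ₁ ∈ (0,1), and ν = θ₁/(‖B‖ + σ). Let s_cp minimize the Cauchy model m_cp(s) = f(x) + gᵀs + (1/(2ν))‖s‖² + ψ(s), with decrease ξ_cp := f(x) + ψ(0) − (f(x) + gᵀs_cp + ψ(s_cp)) ≥ (1/(2ν))‖s_cp‖². If s ∈ ℝⁿ satisfies m(s) ≤ m(s_cp), where m(s) = f(x) + gᵀs + ½sᵀBs + (σ/2)‖s‖² + ψ(s), then f(x) + ψ(0) − (f(x) + gᵀs + ½sᵀBs + ψ(s)) ≥ (1−θ₁)·ξ_cp. -/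
open scoped RealInnerProductSpace

theorem stmt3 {n : ℕ} (ψ : EuclideanSpace ℝ (Fin n) → EReal)
    (hbot : ∀ z, ψ z ≠ ⊥) (hlsc : LowerSemicontinuous ψ) (hψ0 : ψ 0 ≠ ⊤)
    (g : EuclideanSpace ℝ (Fin n))
    (B : EuclideanSpace ℝ (Fin n) →L[ℝ] EuclideanSpace ℝ (Fin n)) (hB : IsSelfAdjoint B)
    (σ θ₁ : ℝ) (hσ : 0 < σ) (hθ₁ : 0 < θ₁) (hθ₂ : θ₁ < 1)
    (ν : ℝ) (hν : ν = θ₁ / (‖B‖ + σ))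
    (scp : EuclideanSpace ℝ (Fin n))
    (hcp : ∀ s, ((⟪g, scp⟫ + 1 / (2 * ν) * ‖scp‖ ^ 2 : ℝ) : EReal) + ψ scp ≤
      ((⟪g, s⟫ + 1 / (2 * ν) * ‖s‖ ^ 2 : ℝ) : EReal) + ψ s)
    (ξcp : ℝ)
    (hξdef : ((⟪g, scp⟫ : ℝ) : EReal) + ψ scp + ((ξcp : ℝ) : EReal) = ψ 0)
    (hξlb : 1 / (2 * ν) * ‖scp‖ ^ 2 ≤ ξcp)
    (s : EuclideanSpace ℝ (Fin n))
    (hms : ((⟪g, s⟫ + (1/2) * ⟪B s, s⟫ + σ / 2 * ‖s‖ ^ 2 : ℝ) : EReal) + ψ s ≤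
      ((⟪g, scp⟫ + (1/2) * ⟪B scp, scp⟫ + σ / 2 * ‖scp‖ ^ 2 : ℝ) : EReal) + ψ scp) :
    (((1 - θ₁) * ξcp : ℝ) : EReal) + (((⟪g, s⟫ + (1/2) * ⟪B s, s⟫ : ℝ) : EReal) + ψ s) ≤ ψ 0 := by
  -- ψ scp is finite
  have hscp_top : ψ scp ≠ ⊤ := by
    intro h
    rw [h] at hξdef
    simp at hξdef
    exact hψ0 hξdef.symm
  obtain ⟨r, hr⟩ : ∃ r : ℝ, ψ scp = (r : EReal) :=
    ⟨(ψ scp).toReal, (EReal.coe_toReal hscp_top (hbot scp)).symm⟩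
  rw [hr] at hms hξdef
  -- ψ s is finite
  have hs_top : ψ s ≠ ⊤ := by
    intro h
    rw [h, EReal.coe_add_top, ← EReal.coe_add] at hms
    exact EReal.coe_ne_top _ (top_le_iff.mp hms)
  obtain ⟨t, ht⟩ : ∃ t : ℝ, ψ s = (t : EReal) :=
    ⟨(ψ s).toReal, (EReal.coe_toReal hs_top (hbot s)).symm⟩
  rw [ht] at hms ⊢
  -- ψ 0 is a real number
  rw [← EReal.coe_add, ← EReal.coe_add] at hξdef
  rw [← hξdef]
  rw [← EReal.coe_add, ← EReal.coe_add] at hms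
  rw [← EReal.coe_add, ← EReal.coe_add]
  rw [EReal.coe_le_coe_iff] at hms
  rw [EReal.coe_le_coe_iff]
  -- now pure real arithmetic
  have hBnorm : (0 : ℝ) ≤ ‖B‖ := norm_nonneg B
  have hden : 0 < ‖B‖ + σ := by linarith
  have hνpos : 0 < ν := by rw [hν]; positivity
  have hkey : ⟪B scp, scp⟫ ≤ ‖B‖ * ‖scp‖ ^ 2 := by
    calc ⟪B scp, scp⟫ ≤ ‖B scp‖ * ‖scp‖ := real_inner_le_norm _ _
      _ ≤ (‖B‖ * ‖scp‖) * ‖scp‖ := by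
          apply mul_le_mul_of_nonneg_right (B.le_opNorm scp) (norm_nonneg _)
      _ = ‖B‖ * ‖scp‖ ^ 2 := by ring
  obtain ⟨c, hc⟩ : ∃ c : ℝ, ‖B‖ = c := ⟨_, rfl⟩
  rw [hc] at hν hkey hBnorm hden
  have hfrac : θ₁ * (1 / (2 * ν)) = (c + σ) / 2 := by
    rw [hν]; field_simp
  have h1 : (c + σ) / 2 * ‖scp‖ ^ 2 ≤ θ₁ * ξcp := by
    rw [← hfrac, mul_assoc]
    exact mul_le_mul_of_nonneg_left hξlb (le_of_lt hθ₁)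
  have hsn : (0 : ℝ) ≤ σ / 2 * ‖s‖ ^ 2 := by positivity
  nlinarith [hms, h1, hkey, hsn]
end

section
/- With the setup of the Cauchy-decrease proposition, suppose instead that ν = θ₁/(β + σ), where β ≥ μ‖B‖ for some μ ∈ (0,1) with θ₁ < μ, and β ≤ ‖B‖. If s satisfies m(s) ≤ m(s_cp), then the model decrease satisfies f(x) + ψ(0) − (f(x) + gᵀs + ½sᵀBs + ψ(s)) ≥ (1 − θ₁/μ)·ξ_cp, with 1 − θ₁/μ > 0. -/
open scoped RealInnerProductSpace

private lemma aux_main (gs Bs ns2 gc Bc nc2 p q ξ nB θ₁ μ β σ ν : ℝ)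
    (hσ : 0 < σ) (hθ₁ : 0 < θ₁) (hμ0 : 0 < μ) (hμ1 : μ < 1) (hθμ : θ₁ < μ)
    (hβl : μ * nB ≤ β) (hβσ : 0 < β + σ) (hν : ν = θ₁ / (β + σ)) (hν0 : 0 < ν)
    (hξlb : 1 / (2 * ν) * nc2 ≤ ξ) (hnc2 : 0 ≤ nc2) (hns2 : 0 ≤ ns2) (hBnn : 0 ≤ nB)
    (hBc : Bc ≤ nB * nc2)
    (hms : gs + 1/2 * Bs + σ / 2 * ns2 + q ≤ gc + 1/2 * Bc + σ / 2 * nc2 + p) :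
    (1 - θ₁ / μ) * ξ + (gs + 1/2 * Bs + q) ≤ gc + p + ξ := by
  have hξ0 : 0 ≤ ξ := le_trans (by positivity) hξlb
  have hnormsq : nc2 ≤ 2 * ν * ξ := by
    have h2ν : 0 < 2 * ν := by linarith
    calc nc2 = 2 * ν * (1 / (2 * ν) * nc2) := by field_simp
    _ ≤ 2 * ν * ξ := by nlinarith
  have hkey : (nB + σ) / 2 * nc2 ≤ θ₁ / μ * ξ := by
    have h1 : (nB + σ) / 2 * nc2 ≤ (nB + σ) / 2 * (2 * ν * ξ) := by
      have h0 : 0 ≤ (nB + σ) / 2 := by linarith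
      nlinarith
    have h2 : (nB + σ) / 2 * (2 * ν * ξ) = θ₁ * (nB + σ) / (β + σ) * ξ := by
      rw [hν]; field_simp
    have h3 : θ₁ * (nB + σ) / (β + σ) ≤ θ₁ / μ := by
      rw [div_le_div_iff₀ hβσ hμ0]
      have hμσ : μ * (nB + σ) ≤ β + σ := by nlinarith
      nlinarith [mul_le_mul_of_nonneg_left hμσ hθ₁.le]
    have h4 := mul_le_mul_of_nonneg_right h3 hξ0
    linarith [h1, h2.le, h2.ge, h4]
  nlinarith [hms, hkey, hBc]

theorem stmt4 {n : ℕ} (ψ : EuclideanSpace ℝ (Fin n) → EReal)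
    (hbot : ∀ z, ψ z ≠ ⊥) (hlsc : LowerSemicontinuous ψ) (hψ0 : ψ 0 ≠ ⊤)
    (g : EuclideanSpace ℝ (Fin n))
    (B : EuclideanSpace ℝ (Fin n) →L[ℝ] EuclideanSpace ℝ (Fin n)) (hB : IsSelfAdjoint B)
    (σ θ₁ μ β : ℝ) (hσ : 0 < σ) (hθ₁ : 0 < θ₁) (hμ0 : 0 < μ) (hμ1 : μ < 1) (hθμ : θ₁ < μ)
    (hβl : μ * ‖B‖ ≤ β) (hβu : β ≤ ‖B‖)
    (ν : ℝ) (hν : ν = θ₁ / (β + σ))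
    (scp : EuclideanSpace ℝ (Fin n))
    (hcp : ∀ s, ((⟪g, scp⟫ + 1 / (2 * ν) * ‖scp‖ ^ 2 : ℝ) : EReal) + ψ scp ≤
      ((⟪g, s⟫ + 1 / (2 * ν) * ‖s‖ ^ 2 : ℝ) : EReal) + ψ s)
    (ξcp : ℝ)
    (hξdef : ((⟪g, scp⟫ : ℝ) : EReal) + ψ scp + ((ξcp : ℝ) : EReal) = ψ 0)
    (hξlb : 1 / (2 * ν) * ‖scp‖ ^ 2 ≤ ξcp)
    (s : EuclideanSpace ℝ (Fin n))
    (hms : ((⟪g, s⟫ + (1/2) * ⟪B s, s⟫ + σ / 2 * ‖s‖ ^ 2 : ℝ) : EReal) + ψ s ≤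
      ((⟪g, scp⟫ + (1/2) * ⟪B scp, scp⟫ + σ / 2 * ‖scp‖ ^ 2 : ℝ) : EReal) + ψ scp) :
    0 < 1 - θ₁ / μ ∧
    (((1 - θ₁ / μ) * ξcp : ℝ) : EReal) + (((⟪g, s⟫ + (1/2) * ⟪B s, s⟫ : ℝ) : EReal) + ψ s) ≤ ψ 0 := by
  have hβ0 : (0:ℝ) ≤ β := le_trans (by positivity) hβl
  have hβσ : 0 < β + σ := by linarith
  have hν0 : 0 < ν := by rw [hν]; positivity
  have hconst : 0 < 1 - θ₁ / μ := by
    have : θ₁ / μ < 1 := (div_lt_one hμ0).mpr hθμ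
    linarith
  refine ⟨hconst, ?_⟩
  obtain ⟨r, hr⟩ : ∃ r : ℝ, ψ 0 = (r : EReal) :=
    ⟨(ψ 0).toReal, (EReal.coe_toReal hψ0 (hbot 0)).symm⟩
  have hscpT : ψ scp ≠ ⊤ := by
    intro h
    have h0 := hcp 0
    rw [h, hr, EReal.add_top_of_ne_bot (EReal.coe_ne_bot _)] at h0
    exact absurd (top_le_iff.mp h0) (by norm_cast)
  obtain ⟨p, hp⟩ : ∃ p : ℝ, ψ scp = (p : EReal) :=
    ⟨(ψ scp).toReal, (EReal.coe_toReal hscpT (hbot scp)).symm⟩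
  rw [hp] at hξdef hms
  rw [hr] at hξdef ⊢
  by_cases hsT : ψ s = ⊤
  · rw [hsT, EReal.add_top_of_ne_bot (EReal.coe_ne_bot _)] at hms
    exact absurd (top_le_iff.mp hms) (by norm_cast)
  obtain ⟨q, hq⟩ : ∃ q : ℝ, ψ s = (q : EReal) :=
    ⟨(ψ s).toReal, (EReal.coe_toReal hsT (hbot s)).symm⟩
  rw [hq] at hms ⊢
  norm_cast at hξdef hms ⊢
  rw [← hξdef]
  have hBnn : 0 ≤ ‖B‖ := ContinuousLinearMap.opNorm_nonneg B
  have hBscp : ⟪B scp, scp⟫ ≤ ‖B‖ * ‖scp‖ ^ 2 := by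
    calc ⟪B scp, scp⟫ ≤ ‖B scp‖ * ‖scp‖ := real_inner_le_norm _ _
    _ ≤ ‖B‖ * ‖scp‖ * ‖scp‖ := by
        have := B.le_opNorm scp
        nlinarith [norm_nonneg scp]
    _ = ‖B‖ * ‖scp‖ ^ 2 := by ring
  have := aux_main ⟪g, s⟫ ⟪B s, s⟫ (‖s‖ ^ 2) ⟪g, scp⟫ ⟪B scp, scp⟫ (‖scp‖ ^ 2)
    p q ξcp ‖B‖ θ₁ μ β σ ν hσ hθ₁ hμ0 hμ1 hθμ hβl hβσ hν hν0 hξlb (by positivity) (by positivity)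
    hBnn hBscp hms
  linarith [this]
end

section
/- Let γ₁ > 1, 0 < γ₃ ≤ 1, σ₀ > 0, b > 0, and τ ∈ ℕ with γ₃·γ₁^(τ−1) > 1. Let S ⊆ ℕ, S_j := {i ∈ S : i ≤ j}, and suppose that for each j, 1/r_j ≤ b/(γ₃^{|S_j|}·γ₁^{j−|S_j|}·σ₀) where r_j > 0. Let W_k^τ := {j : k₀ ≤ j ≤ k, j > τ|S_j|}. Then ∑_{j ∈ W_k^τ} 1/r_j ≤ (b/σ₀)·∑_{j=0}^{∞} (γ₃γ₁^{τ−1})^{−j/τ}, a bound independent of k. In particular, the partial sums ∑_{j ∈ W_k^τ} 1/r_j are uniformly bounded over k. -/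
theorem stmt9 (γ₁ γ₃ σ₀ b : ℝ) (hγ₁ : 1 < γ₁) (hγ₃l : 0 < γ₃) (hγ₃u : γ₃ ≤ 1)
    (hσ₀ : 0 < σ₀) (hb : 0 < b) (τ : ℕ) (hτ : 0 < τ)
    (hq : 1 < γ₃ * γ₁ ^ ((τ : ℝ) - 1))
    (S : Set ℕ) [DecidablePred (· ∈ S)] (r : ℕ → ℝ) (hr : ∀ j, 0 < r j)
    (hbound : ∀ j : ℕ, 1 / r j ≤
      b / (γ₃ ^ ((((Finset.range (j + 1)).filter (· ∈ S)).card : ℝ)) *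
           γ₁ ^ ((j : ℝ) - ((((Finset.range (j + 1)).filter (· ∈ S)).card : ℝ))) * σ₀))
    (k₀ : ℕ) :
    (∀ k : ℕ, (∑ j ∈ (Finset.Icc k₀ k).filter
        (fun j => τ * (((Finset.range (j + 1)).filter (· ∈ S)).card) < j), 1 / r j) ≤
      (b / σ₀) * ∑' j : ℕ, ((γ₃ * γ₁ ^ ((τ : ℝ) - 1)) ^ ((j : ℝ) / (τ : ℝ)))⁻¹) ∧
    ∃ C : ℝ, ∀ k : ℕ, (∑ j ∈ (Finset.Icc k₀ k).filter
        (fun j => τ * (((Finset.range (j + 1)).filter (· ∈ S)).card) < j), 1 / r j) ≤ C := by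
  set q : ℝ := γ₃ * γ₁ ^ ((τ : ℝ) - 1) with hqdef
  have hq0 : (0 : ℝ) < q := lt_trans one_pos hq
  have hτR : (0 : ℝ) < (τ : ℝ) := by exact_mod_cast hτ
  set f : ℕ → ℝ := fun j => (q ^ ((j : ℝ) / (τ : ℝ)))⁻¹ with hfdef
  have hf0 : ∀ j, 0 ≤ f j := fun j => by positivity
  -- summability
  have hc : f = fun j : ℕ => (q ^ (-(τ : ℝ)⁻¹)) ^ j := by
    funext j
    show (q ^ ((j : ℝ) / (τ : ℝ)))⁻¹ = (q ^ (-(τ : ℝ)⁻¹)) ^ j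
    rw [← Real.rpow_natCast (q ^ (-(τ : ℝ)⁻¹)) j, ← Real.rpow_mul hq0.le,
      ← Real.rpow_neg hq0.le]
    congr 1
    ring
  have hsum : Summable f := by
    rw [hc]
    exact summable_geometric_of_lt_one (by positivity)
      (Real.rpow_lt_one_of_one_lt_of_neg hq (by simp [hτ.ne']; positivity))
  -- key pointwise bound
  have key : ∀ j : ℕ, τ * (((Finset.range (j + 1)).filter (· ∈ S)).card) < j →
      1 / r j ≤ (b / σ₀) * f j := by
    intro j hj
    set s : ℝ := ((((Finset.range (j + 1)).filter (· ∈ S)).card : ℝ)) with hsdef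
    have hs0 : 0 ≤ s := by positivity
    have hsle : s ≤ (j : ℝ) / (τ : ℝ) := by
      have h := hj.le
      rw [hsdef, le_div_iff₀ hτR, mul_comm]
      exact_mod_cast h
    have hA : q ^ ((j : ℝ) / (τ : ℝ)) ≤ γ₃ ^ s * γ₁ ^ ((j : ℝ) - s) := by
      have h1 : γ₃ ^ ((j : ℝ) / (τ : ℝ)) ≤ γ₃ ^ s :=
        Real.rpow_le_rpow_of_exponent_ge hγ₃l hγ₃u hsle
      have h2 : γ₁ ^ ((j : ℝ) - (j : ℝ) / (τ : ℝ)) ≤ γ₁ ^ ((j : ℝ) - s) :=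
        Real.rpow_le_rpow_of_exponent_le hγ₁.le (by linarith)
      have hexp : q ^ ((j : ℝ) / (τ : ℝ)) =
          γ₃ ^ ((j : ℝ) / (τ : ℝ)) * γ₁ ^ ((j : ℝ) - (j : ℝ) / (τ : ℝ)) := by
        rw [hqdef, Real.mul_rpow hγ₃l.le (by positivity), ← Real.rpow_mul (by linarith)]
        congr 1
        field_simp
      rw [hexp]
      exact mul_le_mul h1 h2 (by positivity) (by positivity)
    have hB : b / (γ₃ ^ s * γ₁ ^ ((j : ℝ) - s) * σ₀) ≤ b / (q ^ ((j : ℝ) / (τ : ℝ)) * σ₀) := by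
      apply div_le_div_of_nonneg_left hb.le (by positivity)
      exact mul_le_mul_of_nonneg_right hA hσ₀.le
    calc 1 / r j ≤ b / (γ₃ ^ s * γ₁ ^ ((j : ℝ) - s) * σ₀) := hbound j
      _ ≤ b / (q ^ ((j : ℝ) / (τ : ℝ)) * σ₀) := hB
      _ = (b / σ₀) * f j := by rw [hfdef, div_mul_eq_div_div_swap, div_eq_mul_inv]
  have main : ∀ k : ℕ, (∑ j ∈ (Finset.Icc k₀ k).filter
      (fun j => τ * (((Finset.range (j + 1)).filter (· ∈ S)).card) < j), 1 / r j) ≤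
      (b / σ₀) * ∑' j : ℕ, f j := by
    intro k
    calc (∑ j ∈ (Finset.Icc k₀ k).filter
          (fun j => τ * (((Finset.range (j + 1)).filter (· ∈ S)).card) < j), 1 / r j)
        ≤ ∑ j ∈ (Finset.Icc k₀ k).filter
          (fun j => τ * (((Finset.range (j + 1)).filter (· ∈ S)).card) < j),
            (b / σ₀) * f j := by
          apply Finset.sum_le_sum
          intro j hj
          exact key j (Finset.mem_filter.mp hj).2
      _ ≤ ∑' j : ℕ, (b / σ₀) * f j := by
          apply Summable.sum_le_tsum _ (fun j _ => by positivity) (hsum.mul_left _)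
      _ = (b / σ₀) * ∑' j : ℕ, f j := tsum_mul_left
  exact ⟨main, ⟨(b / σ₀) * ∑' j : ℕ, f j, main⟩⟩
end

section
/- Let F : ℝⁿ → ℝ ∪ {+∞}, {xₖ} a sequence with F(xₖ) ≥ F_low for all k, and C > 0. Suppose S ⊆ ℕ is an infinite set indexed increasingly by φ : ℕ → S with F(x_{φ(k)}) − F(x_{φ(k)+1}) ≥ C/(k+1)^p for all k and F non-increasing along the sequence, where 0 ≤ p < 1. If S(ε) is an initial segment of S of cardinality N, then F(x₀) − F_low ≥ C·((N+1)^{1−p} − 1)/(1−p), hence N ≤ ((1−p)(F(x₀) − F_low)/C + 1)^{1/(1−p)} − 1. -/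
lemma key_ineq (p : ℝ) (hp0 : 0 ≤ p) (hp1 : p < 1) (a : ℝ) (ha : 1 ≤ a) :
    (a + 1) ^ (1 - p) - a ^ (1 - p) ≤ (1 - p) / a ^ p := by
  have ha0 : 0 < a := lt_of_lt_of_le one_pos ha
  have hs : 0 < 1 - p := by linarith
  -- MVT
  obtain ⟨c, hc, hderiv⟩ := exists_hasDerivAt_eq_slope (fun t => t ^ (1 - p))
    (fun t => (1 - p) * t ^ (1 - p - 1)) (by linarith : a < a + 1)
    (by
      apply ContinuousOn.rpow_const continuousOn_id
      intro t ht
      left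
      exact ne_of_gt (lt_of_lt_of_le ha0 ht.1))
    (fun t ht => Real.hasDerivAt_rpow_const (Or.inl (ne_of_gt (lt_of_lt_of_le ha0 ht.1.le))))
  have hca : a ≤ c := hc.1.le
  have hc0 : 0 < c := lt_of_lt_of_le ha0 hca
  have hmono : c ^ (1 - p - 1) ≤ a ^ (1 - p - 1) :=
    Real.rpow_le_rpow_of_nonpos ha0 hca (by linarith)
  have h1 : (a + 1) ^ (1 - p) - a ^ (1 - p) = (1 - p) * c ^ (1 - p - 1) := by
    have := hderiv
    simp only [add_sub_cancel_left, div_one] at this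
    linarith [this]
  rw [h1]
  have h2 : a ^ (1 - p - 1) = (a ^ p)⁻¹ := by
    rw [show (1 - p - 1 : ℝ) = -p by ring, Real.rpow_neg ha0.le]
  calc (1 - p) * c ^ (1 - p - 1) ≤ (1 - p) * a ^ (1 - p - 1) := by
        exact mul_le_mul_of_nonneg_left hmono hs.le
    _ = (1 - p) / a ^ p := by rw [h2, div_eq_mul_inv]

theorem stmt10 {n : ℕ} (F : EuclideanSpace ℝ (Fin n) → EReal)
    (x : ℕ → EuclideanSpace ℝ (Fin n)) (Flow : ℝ)
    (hlow : ∀ k, (Flow : EReal) ≤ F (x k))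
    (hfin : F (x 0) ≠ ⊤)
    (hmono : ∀ k, F (x (k + 1)) ≤ F (x k))
    (C p : ℝ) (hC : 0 < C) (hp0 : 0 ≤ p) (hp1 : p < 1)
    (S : Set ℕ) (hS : S.Infinite) (φ : ℕ → ℕ) (hφ : StrictMono φ) (hφS : ∀ k, φ k ∈ S)
    (hdec : ∀ k : ℕ, F (x (φ k + 1)) + ((C / ((k : ℝ) + 1) ^ p : ℝ) : EReal) ≤ F (x (φ k))) :
    ∀ N : ℕ,
      ((C * (((N : ℝ) + 1) ^ (1 - p) - 1) / (1 - p) : ℝ) : EReal) ≤ F (x 0) - (Flow : EReal) ∧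
      (N : ℝ) ≤ ((1 - p) * ((F (x 0)).toReal - Flow) / C + 1) ^ (1 / (1 - p)) - 1 := by
  have hs : 0 < 1 - p := by linarith
  have hanti : Antitone (fun k => F (x k)) := antitone_nat_of_succ_le hmono
  have hne_top : ∀ k, F (x k) ≠ ⊤ := fun k =>
    ne_top_of_le_ne_top hfin (hanti (Nat.zero_le k))
  have hne_bot : ∀ k, F (x k) ≠ ⊥ := fun k =>
    ne_bot_of_le_ne_bot (EReal.coe_ne_bot Flow) (hlow k)
  set f : ℕ → ℝ := fun k => (F (x k)).toReal with hf
  have hFf : ∀ k, F (x k) = ((f k : ℝ) : EReal) := fun k =>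
    (EReal.coe_toReal (hne_top k) (hne_bot k)).symm
  have hfanti : Antitone f := fun a b hab =>
    EReal.toReal_le_toReal (hanti hab) (hne_bot b) (hne_top a)
  have hflow : ∀ k, Flow ≤ f k := by
    intro k
    have := hlow k
    rw [hFf k, EReal.coe_le_coe_iff] at this
    exact this
  have hdec' : ∀ k : ℕ, f (φ k + 1) + C / ((k : ℝ) + 1) ^ p ≤ f (φ k) := by
    intro k
    have := hdec k
    rw [hFf (φ k + 1), hFf (φ k), ← EReal.coe_add, EReal.coe_le_coe_iff] at this
    exact this
  -- telescoping sum
  have hsum : ∀ N : ℕ, f (φ N) + ∑ k ∈ Finset.range N, C / ((k : ℝ) + 1) ^ p ≤ f (φ 0) := by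
    intro N
    induction N with
    | zero => simp
    | succ N ih =>
        have h1 : φ N + 1 ≤ φ (N + 1) := hφ (Nat.lt_succ_self N)
        have h2 : f (φ (N + 1)) ≤ f (φ N + 1) := hfanti h1
        rw [Finset.sum_range_succ]
        have := hdec' N
        linarith
  intro N
  -- lower bound on the sum
  have hsum_lb : C * (((N : ℝ) + 1) ^ (1 - p) - 1) / (1 - p)
      ≤ ∑ k ∈ Finset.range N, C / ((k : ℝ) + 1) ^ p := by
    have htel : ∑ k ∈ Finset.range N, (((k : ℝ) + 2) ^ (1 - p) - ((k : ℝ) + 1) ^ (1 - p))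
        = ((N : ℝ) + 1) ^ (1 - p) - 1 := by
      have h := Finset.sum_range_sub (fun k : ℕ => (((k : ℝ) + 1) ^ (1 - p))) N
      simp only [Nat.cast_add, Nat.cast_one, Nat.cast_zero, zero_add, Real.one_rpow] at h
      rw [← h]
      refine Finset.sum_congr rfl fun k _ => ?_
      rw [show ((k : ℝ) + 2) = (k : ℝ) + 1 + 1 from by ring]
    have hterm : ∀ k ∈ Finset.range N,
        C / (1 - p) * (((k : ℝ) + 2) ^ (1 - p) - ((k : ℝ) + 1) ^ (1 - p))
        ≤ C / ((k : ℝ) + 1) ^ p := by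
      intro k _
      have hk1 : (1 : ℝ) ≤ (k : ℝ) + 1 := by
        linarith [Nat.cast_nonneg (α := ℝ) k]
      have hthis := key_ineq p hp0 hp1 ((k : ℝ) + 1) hk1
      have h22 : (k : ℝ) + 1 + 1 = (k : ℝ) + 2 := by ring
      rw [h22] at hthis
      have hpow : (0 : ℝ) < ((k : ℝ) + 1) ^ p := Real.rpow_pos_of_pos (by positivity) p
      have h3 : (((k : ℝ) + 2) ^ (1 - p) - ((k : ℝ) + 1) ^ (1 - p)) * ((k : ℝ) + 1) ^ p
          ≤ 1 - p := (le_div_iff₀ hpow).mp hthis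
      rw [div_mul_eq_mul_div, div_le_div_iff₀ hs hpow]
      nlinarith [mul_le_mul_of_nonneg_left h3 hC.le]
    calc C * (((N : ℝ) + 1) ^ (1 - p) - 1) / (1 - p)
        = ∑ k ∈ Finset.range N, C / (1 - p) * (((k : ℝ) + 2) ^ (1 - p) - ((k : ℝ) + 1) ^ (1 - p)) := by
          rw [← Finset.mul_sum, htel]; ring
      _ ≤ ∑ k ∈ Finset.range N, C / ((k : ℝ) + 1) ^ p := Finset.sum_le_sum hterm
  have hmain : C * (((N : ℝ) + 1) ^ (1 - p) - 1) / (1 - p) ≤ f 0 - Flow := by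
    have h1 := hsum N
    have h2 := hflow (φ N)
    have h3 : f (φ 0) ≤ f 0 := hfanti (Nat.zero_le _)
    linarith
  constructor
  · rw [hFf 0, ← EReal.coe_sub, EReal.coe_le_coe_iff]
    exact hmain
  · have hbase : ((N : ℝ) + 1) ^ (1 - p) ≤ (1 - p) * (f 0 - Flow) / C + 1 := by
      rw [div_le_iff₀ hs, mul_comm] at hmain
      rw [div_add' _ _ _ (ne_of_gt hC), le_div_iff₀ hC]
      nlinarith
    have hN1 : (0 : ℝ) ≤ (N : ℝ) + 1 := by positivity
    have := Real.rpow_le_rpow (Real.rpow_nonneg hN1 _) hbase (by positivity : (0:ℝ) ≤ 1 / (1 - p))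
    rw [← Real.rpow_mul hN1, mul_one_div, div_self (ne_of_gt hs), Real.rpow_one] at this
    have heq : (1 - p) * (f 0 - Flow) / C + 1 = (1 - p) * ((F (x 0)).toReal - Flow) / C + 1 := rfl
    rw [heq] at this
    linarith
end

section
/- Let γ₁ > 1, 0 < γ₃ ≤ 1, σ₀ > 0. Suppose a sequence {σₖ} satisfies: for k in a set U (unsuccessful iterations), σₖ₊₁ ≥ γ₁σₖ; for k ∉ U, σₖ₊₁ ≥ γ₃σₖ. Then for all k, σₖ ≥ σ₀·γ₃^{|Sₖ|}·γ₁^{|Uₖ|}, where Sₖ and Uₖ are the successful and unsuccessful indices below k. Consequently, if σₖ ≤ σ_max for all k < K, then |U_{K}| ≤ |log_{γ₁}(γ₃)|·|S_{K}| + log_{γ₁}(σ_max/σ₀). -/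
theorem stmt13 (γ₁ γ₃ σ₀ : ℝ) (hγ₁ : 1 < γ₁) (hγ₃l : 0 < γ₃) (hγ₃u : γ₃ ≤ 1) (hσ₀ : 0 < σ₀)
    (U : Set ℕ) [DecidablePred (· ∈ U)]
    (σ : ℕ → ℝ) (h0 : σ 0 = σ₀)
    (hU : ∀ k ∈ U, γ₁ * σ k ≤ σ (k + 1))
    (hSucc : ∀ k, k ∉ U → γ₃ * σ k ≤ σ (k + 1)) :
    (∀ k : ℕ, σ₀ * γ₃ ^ (((Finset.range k).filter (· ∉ U)).card) *
        γ₁ ^ (((Finset.range k).filter (· ∈ U)).card) ≤ σ k) ∧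
    ∀ (K : ℕ) (σmax : ℝ), (∀ k ≤ K, σ k ≤ σmax) →
      ((((Finset.range K).filter (· ∈ U)).card : ℝ) ≤
        |Real.log γ₃ / Real.log γ₁| * ((((Finset.range K).filter (· ∉ U)).card : ℝ)) +
        Real.log (σmax / σ₀) / Real.log γ₁) := by
  have hγ₁0 : (0:ℝ) < γ₁ := lt_trans one_pos hγ₁
  have main : ∀ k : ℕ, σ₀ * γ₃ ^ (((Finset.range k).filter (· ∉ U)).card) *
      γ₁ ^ (((Finset.range k).filter (· ∈ U)).card) ≤ σ k := by
    intro k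
    induction k with
    | zero => simp [h0]
    | succ k ih =>
      rw [Finset.range_add_one, Finset.filter_insert, Finset.filter_insert]
      by_cases hk : k ∈ U
      · simp only [hk, not_true_eq_false, if_false, if_true]
        rw [Finset.card_insert_of_notMem (by simp)]
        calc σ₀ * γ₃ ^ (((Finset.range k).filter (· ∉ U)).card) *
              γ₁ ^ (((Finset.range k).filter (· ∈ U)).card + 1)
            = γ₁ * (σ₀ * γ₃ ^ (((Finset.range k).filter (· ∉ U)).card) *
              γ₁ ^ (((Finset.range k).filter (· ∈ U)).card)) := by ring
          _ ≤ γ₁ * σ k := by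
              exact mul_le_mul_of_nonneg_left ih (le_of_lt hγ₁0)
          _ ≤ σ (k+1) := hU k hk
      · simp only [hk, not_false_eq_true, if_true, if_false]
        rw [Finset.card_insert_of_notMem (by simp)]
        calc σ₀ * γ₃ ^ (((Finset.range k).filter (· ∉ U)).card + 1) *
              γ₁ ^ (((Finset.range k).filter (· ∈ U)).card)
            = γ₃ * (σ₀ * γ₃ ^ (((Finset.range k).filter (· ∉ U)).card) *
              γ₁ ^ (((Finset.range k).filter (· ∈ U)).card)) := by ring
          _ ≤ γ₃ * σ k := mul_le_mul_of_nonneg_left ih (le_of_lt hγ₃l)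
          _ ≤ σ (k+1) := hSucc k hk
  refine ⟨main, ?_⟩
  intro K σmax hmax
  set s := ((Finset.range K).filter (· ∉ U)).card
  set u := ((Finset.range K).filter (· ∈ U)).card
  have hlow : σ₀ * γ₃ ^ s * γ₁ ^ u ≤ σ K := main K
  have hσK : σ K ≤ σmax := hmax K le_rfl
  have hpos : 0 < σ₀ * γ₃ ^ s * γ₁ ^ u := by positivity
  have hσmaxpos : 0 < σmax := lt_of_lt_of_le hpos (hlow.trans hσK)
  have hlog : Real.log (σ₀ * γ₃ ^ s * γ₁ ^ u) ≤ Real.log σmax :=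
    Real.log_le_log hpos (hlow.trans hσK)
  rw [Real.log_mul (by positivity) (by positivity),
      Real.log_mul (by positivity) (by positivity),
      Real.log_pow, Real.log_pow] at hlog
  have hlγ₁ : 0 < Real.log γ₁ := Real.log_pos hγ₁
  have hlγ₃ : Real.log γ₃ ≤ 0 := Real.log_nonpos (le_of_lt hγ₃l) hγ₃u
  have habs : |Real.log γ₃ / Real.log γ₁| = -Real.log γ₃ / Real.log γ₁ := by
    rw [abs_div, abs_of_nonpos hlγ₃, abs_of_pos hlγ₁]
  rw [habs, Real.log_div (ne_of_gt hσmaxpos) (ne_of_gt hσ₀)]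
  rw [div_mul_eq_mul_div, ← add_div, le_div_iff₀ hlγ₁]
  nlinarith [hlog]
end

section
/- Let φ, ψ : ℝⁿ → ℝ ∪ {+∞}, x ∈ ℝⁿ, σ > 0, and suppose s minimizes m(·) := φ(·) + (σ/2)‖·‖² + ψ(·) up to the level m(s) ≤ m(0), with φ(0), ψ(0), φ(s), ψ(s) finite. Suppose the model-adequacy bound |(f+h)(x+s) − (φ(s) + ψ(s))| ≤ κ(1 + β)‖s‖² holds for constants κ > 0, β ≥ 0. Define ρ := ((f+h)(x) − (f+h)(x+s)) / (φ(0)+ψ(0) − φ(s) − ψ(s)), assuming φ(0)+ψ(0) = (f+h)(x) and the denominator is positive. Then |ρ − 1| ≤ 2κ(1+β)/σ. In particular, if σ ≥ 2κ(1+β)/(1−η₂) for some η₂ ∈ (0,1), then ρ ≥ η₂. -/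
theorem stmt15 {n : ℕ} (φ ψ : EuclideanSpace ℝ (Fin n) → EReal)
    (fh : EuclideanSpace ℝ (Fin n) → ℝ)
    (x s : EuclideanSpace ℝ (Fin n)) (σ : ℝ) (hσ : 0 < σ)
    (p0 q0 ps qs : ℝ) (hφ0 : φ 0 = (p0 : EReal)) (hψ0 : ψ 0 = (q0 : EReal))
    (hφs : φ s = (ps : EReal)) (hψs : ψ s = (qs : EReal))
    (hm : ps + σ / 2 * ‖s‖ ^ 2 + qs ≤ p0 + q0)
    (κ β : ℝ) (hκ : 0 < κ) (hβ : 0 ≤ β)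
    (hadeq : |fh (x + s) - (ps + qs)| ≤ κ * (1 + β) * ‖s‖ ^ 2)
    (hfhx : fh x = p0 + q0)
    (hden : 0 < p0 + q0 - ps - qs) :
    |(fh x - fh (x + s)) / (p0 + q0 - ps - qs) - 1| ≤ 2 * κ * (1 + β) / σ ∧
    ∀ η₂ : ℝ, η₂ ∈ Set.Ioo (0 : ℝ) 1 → 2 * κ * (1 + β) / (1 - η₂) ≤ σ →
      η₂ ≤ (fh x - fh (x + s)) / (p0 + q0 - ps - qs) := by
  set D := p0 + q0 - ps - qs with hD
  have hkb : 0 < κ * (1 + β) := by positivity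
  have hDlb : σ / 2 * ‖s‖ ^ 2 ≤ D := by simp [hD]; linarith
  have key : |(fh x - fh (x + s)) / D - 1| ≤ 2 * κ * (1 + β) / σ := by
    have h1 : (fh x - fh (x + s)) / D - 1 = ((ps + qs) - fh (x + s)) / D := by
      field_simp [hfhx]; linarith [hD]
    rw [h1, abs_div, abs_of_pos hden, abs_sub_comm]
    rw [div_le_div_iff₀ hden hσ]
    calc |fh (x + s) - (ps + qs)| * σ ≤ (κ * (1 + β) * ‖s‖ ^ 2) * σ := by
          exact mul_le_mul_of_nonneg_right hadeq hσ.le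
      _ = 2 * κ * (1 + β) * (σ / 2 * ‖s‖ ^ 2) := by ring
      _ ≤ 2 * κ * (1 + β) * D := by nlinarith
  refine ⟨key, fun η₂ hη hσ2 => ?_⟩
  obtain ⟨hη0, hη1⟩ := hη
  have h1η : 0 < 1 - η₂ := by linarith
  have h2 : 2 * κ * (1 + β) / σ ≤ 1 - η₂ := by
    rw [div_le_iff₀ hσ]
    have := (div_le_iff₀ h1η).mp hσ2
    nlinarith
  have := abs_le.mp key
  linarith [this.1, h2]
end
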